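/- In the formal power series ring ℚ[[t]], (1 - 4t² + t⁴)/(1 - 5t² + 4t⁴) = (1 - 4cos²(π/12)t²)(1 - 4cos²(5π/12)t²)/((1-2t)(1+2t)(1-t)(1+t)), and its power series coefficients begin 1 + t² + 2t⁴ + 6t⁶ + 22t⁸ + 86t^{10} + ⋯. -/

import Mathlib

open PowerSeries Real

/-- The Poincaré series for the `T`-invariants in `T(ℂ²)` coming from the pair `(O, T)`:
the rational function identity
`(1 - 4t² + t⁴)/(1 - 5t² + 4t⁴)
  = (1 - 4cos²(π/12)t²)(1 - 4cos²(5π/12)t²)/((1-2t)(1+2t)(1-t)(1+t))`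
together with the first power-series coefficients `1 + t² + 2t⁴ + 6t⁶ + 22t⁸ + 86t¹⁰ + ⋯`. -/
theorem poincare_series_O_T :
    (∀ t : ℝ,
        (1 - 4 * Real.cos (Real.pi / 12) ^ 2 * t ^ 2) *
            (1 - 4 * Real.cos (5 * Real.pi / 12) ^ 2 * t ^ 2) *
            (1 - 5 * t ^ 2 + 4 * t ^ 4) =
          (1 - 4 * t ^ 2 + t ^ 4) * ((1 - 2 * t) * (1 + 2 * t) * (1 - t) * (1 + t))) ∧
      (let f : PowerSeries ℚ :=
          (1 - 4 * (PowerSeries.X : PowerSeries ℚ) ^ 2 + PowerSeries.X ^ 4) *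
            (1 - 5 * PowerSeries.X ^ 2 + 4 * PowerSeries.X ^ 4)⁻¹
       PowerSeries.coeff (R := ℚ) 0 f = 1 ∧ PowerSeries.coeff (R := ℚ) 1 f = 0 ∧
         PowerSeries.coeff (R := ℚ) 2 f = 1 ∧ PowerSeries.coeff (R := ℚ) 3 f = 0 ∧
         PowerSeries.coeff (R := ℚ) 4 f = 2 ∧ PowerSeries.coeff (R := ℚ) 5 f = 0 ∧
         PowerSeries.coeff (R := ℚ) 6 f = 6 ∧ PowerSeries.coeff (R := ℚ) 7 f = 0 ∧
         PowerSeries.coeff (R := ℚ) 8 f = 22 ∧ PowerSeries.coeff (R := ℚ) 9 f = 0 ∧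
         PowerSeries.coeff (R := ℚ) 10 f = 86) := by
  constructor
  · intro t
    have h1 : Real.cos (Real.pi / 12) ^ 2 = 1 / 2 + Real.cos (Real.pi / 6) / 2 := by
      rw [Real.cos_sq]; ring_nf
    have h2 : Real.cos (5 * Real.pi / 12) ^ 2 = 1 / 2 + Real.cos (Real.pi - Real.pi / 6) / 2 := by
      rw [Real.cos_sq]; ring_nf
    rw [h1, h2, Real.cos_pi_sub, Real.cos_pi_div_six]
    have h3 : (Real.sqrt 3) ^ 2 = 3 := Real.sq_sqrt (by norm_num)
    linear_combination (-(t ^ 4) + 5 * t ^ 6 - 4 * t ^ 8) * h3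
  · intro f
    have hfval : f = (1 - 4 * (PowerSeries.X : PowerSeries ℚ) ^ 2 + PowerSeries.X ^ 4) *
        (1 - 5 * PowerSeries.X ^ 2 + 4 * PowerSeries.X ^ 4)⁻¹ := rfl
    clear_value f
    set D : PowerSeries ℚ := 1 - 5 * PowerSeries.X ^ 2 + 4 * PowerSeries.X ^ 4 with hDdef
    set N : PowerSeries ℚ := 1 - 4 * PowerSeries.X ^ 2 + PowerSeries.X ^ 4 with hNdef
    have hc : constantCoeff (R := ℚ) D ≠ 0 := by
      simp [hDdef]
    have hDf : D * f = N := by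
      rw [hfval, mul_comm D, mul_assoc, PowerSeries.inv_mul_cancel D hc, mul_one]
    have e4 : (C (R := ℚ)) 4 = 4 := map_ofNat _ 4
    have e5 : (C (R := ℚ)) 5 = 5 := map_ofNat _ 5
    have hD' : D = 1 - C (R := ℚ) 5 * PowerSeries.X ^ 2 + C (R := ℚ) 4 * PowerSeries.X ^ 4 := by
      rw [hDdef, e5, e4]
    have hN' : N = 1 - C (R := ℚ) 4 * PowerSeries.X ^ 2 + C (R := ℚ) 1 * PowerSeries.X ^ 4 := by
      rw [hNdef, e4, map_one, one_mul]
    have hf : f = N + C (R := ℚ) 5 * (PowerSeries.X ^ 2 * f) - C (R := ℚ) 4 * (PowerSeries.X ^ 4 * f) := by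
      rw [hD'] at hDf
      linear_combination hDf
    have key : ∀ n : ℕ, coeff (R := ℚ) n f =
        coeff (R := ℚ) n N + 5 * (if 2 ≤ n then coeff (R := ℚ) (n - 2) f else 0)
          - 4 * (if 4 ≤ n then coeff (R := ℚ) (n - 4) f else 0) := by
      intro n
      conv_lhs => rw [hf]
      simp [PowerSeries.coeff_C_mul, PowerSeries.coeff_X_pow_mul', mul_ite]
    have hN : ∀ n : ℕ, coeff (R := ℚ) n N =
        (if n = 0 then 1 else 0) - 4 * (if n = 2 then 1 else 0) + (if n = 4 then 1 else 0) := by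
      intro n
      rw [hN']
      simp [PowerSeries.coeff_C_mul_X_pow, PowerSeries.coeff_X_pow, PowerSeries.coeff_one,
        mul_ite]
    have c0 : coeff (R := ℚ) 0 f = 1 := by rw [key 0, hN 0]; norm_num
    have c1 : coeff (R := ℚ) 1 f = 0 := by rw [key 1, hN 1]; norm_num
    have c2 : coeff (R := ℚ) 2 f = 1 := by rw [key 2, hN 2]; norm_num [c0]
    have c3 : coeff (R := ℚ) 3 f = 0 := by rw [key 3, hN 3]; norm_num [c1]
    have c4 : coeff (R := ℚ) 4 f = 2 := by rw [key 4, hN 4]; norm_num [c0, c2]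
    have c5 : coeff (R := ℚ) 5 f = 0 := by rw [key 5, hN 5]; norm_num [c1, c3]
    have c6 : coeff (R := ℚ) 6 f = 6 := by rw [key 6, hN 6]; norm_num [c2, c4]
    have c7 : coeff (R := ℚ) 7 f = 0 := by rw [key 7, hN 7]; norm_num [c3, c5]
    have c8 : coeff (R := ℚ) 8 f = 22 := by rw [key 8, hN 8]; norm_num [c4, c6]
    have c9 : coeff (R := ℚ) 9 f = 0 := by rw [key 9, hN 9]; norm_num [c5, c7]
    have c10 : coeff (R := ℚ) 10 f = 86 := by rw [key 10, hN 10]; norm_num [c6, c8]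
    exact ⟨c0, c1, c2, c3, c4, c5, c6, c7, c8, c9, c10⟩
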